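/- Let T be an empty lattice tetrahedron in ℝ³, i.e. the convex hull of four affinely independent points of ℤ³ containing no point of ℤ³ other than its four vertices. Then there exist integers a, b, c with 0 ≤ a, b < c, gcd(a,c) = gcd(b,c) = gcd(d,c) = 1 (where d = (1−a−b) mod c with 0 ≤ d < c), and an affine unimodular map L such that L(T) = T_{a,b,c}. -/

import Mathlib

/-- A point of `ℝ³` is a lattice point if all of its coordinates are integers. -/
def IsLatticePt (x : Fin 3 → ℝ) : Prop := ∀ i, ∃ m : ℤ, x i = (m : ℝ)

/-- The tetrahedron `T_{a,b,c}`: the convex hull of `(0,0,0)`, `(1,0,0)`, `(0,1,0)`, `(a,b,c)`. -/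
def Tet (a b c : ℤ) : Set (Fin 3 → ℝ) :=
  convexHull ℝ {![0,0,0], ![1,0,0], ![0,1,0], ![(a : ℝ), (b : ℝ), (c : ℝ)]}

/-- `T_{a,b,c}` is an empty lattice tetrahedron: it contains no point of `ℤ³`
other than its four vertices. -/
def TetIsEmpty (a b c : ℤ) : Prop :=
  ∀ x ∈ Tet a b c, IsLatticePt x →
    x = ![0,0,0] ∨ x = ![1,0,0] ∨ x = ![0,1,0] ∨ x = ![(a : ℝ), (b : ℝ), (c : ℝ)]

namespace WhiteAux

/-- cast of an integer vector to ℝ³ -/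
def cv (p : Fin 3 → ℤ) : Fin 3 → ℝ := fun j => (p j : ℝ)

lemma cv_inj {p q : Fin 3 → ℤ} (h : cv p = cv q) : p = q := by
  funext j
  have := congrFun h j
  simp only [cv] at this
  exact_mod_cast this

lemma cv_sub (p q : Fin 3 → ℤ) : cv (p - q) = cv p - cv q := by
  funext j; simp [cv]

lemma cv_add (p q : Fin 3 → ℤ) : cv (p + q) = cv p + cv q := by
  funext j; simp [cv]

lemma cv_zsmul (m : ℤ) (u : Fin 3 → ℤ) : cv (m • u) = (m : ℝ) • cv u := by
  funext j; simp [cv]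

lemma cv_zero : cv 0 = 0 := by funext j; simp [cv]

lemma cv_mulVec (M : Matrix (Fin 3) (Fin 3) ℤ) (p : Fin 3 → ℤ) :
    (M.map (Int.cast : ℤ → ℝ)).mulVec (cv p) = cv (M.mulVec p) := by
  funext i
  exact ((RingHom.map_mulVec (Int.castRingHom ℝ) M p i)).symm

lemma mem_hull3 {x0 x1 x2 : Fin 3 → ℝ} {s t : ℝ} (hs : 0 ≤ s) (ht : 0 ≤ t)
    (hst : s + t ≤ 1) :
    (1 - s - t) • x0 + s • x1 + t • x2 ∈ convexHull ℝ ({x0, x1, x2} : Set (Fin 3 → ℝ)) := by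
  have hw : ∑ i : Fin 3, (![1 - s - t, s, t] : Fin 3 → ℝ) i = 1 := by
    simp [Fin.sum_univ_three]; ring
  have h := Finset.centerMass_mem_convexHull (Finset.univ : Finset (Fin 3))
    (w := ![1 - s - t, s, t]) (z := ![x0, x1, x2]) (s := {x0, x1, x2})
    (by intro i _; fin_cases i <;> simp [hs, ht] <;> linarith)
    (by rw [hw]; norm_num)
    (by intro i _; fin_cases i <;> simp [Set.mem_insert_iff])
  rwa [Finset.centerMass_eq_of_sum_1 _ _ hw, Fin.sum_univ_three] at h

lemma key (u v : Fin 3 → ℤ)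
    (hind : ∀ s t : ℝ, s • cv u + t • cv v = 0 → s = 0 ∧ t = 0)
    (hemp : ∀ q : Fin 3 → ℤ, cv q ∈ convexHull ℝ ({0, cv u, cv v} : Set (Fin 3 → ℝ)) →
      q = 0 ∨ q = u ∨ q = v)
    (p : Fin 3 → ℤ) (α β : ℝ) (hp : cv p = α • cv u + β • cv v) :
    ∃ m n : ℤ, p = m • u + n • v := by
  set s := Int.fract α with hsdef
  set t := Int.fract β with htdef
  have hs0 : 0 ≤ s := Int.fract_nonneg α
  have ht0 : 0 ≤ t := Int.fract_nonneg β
  have hs1 : s < 1 := Int.fract_lt_one α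
  have ht1 : t < 1 := Int.fract_lt_one β
  set q : Fin 3 → ℤ := p - ⌊α⌋ • u - ⌊β⌋ • v with hqdef
  have hq : cv q = s • cv u + t • cv v := by
    rw [hqdef, cv_sub, cv_sub, cv_zsmul, cv_zsmul, hp]
    rw [hsdef, htdef, Int.fract, Int.fract]
    module
  by_cases h0 : s = 0 ∧ t = 0
  · refine ⟨⌊α⌋, ⌊β⌋, ?_⟩
    have : cv q = 0 := by rw [hq, h0.1, h0.2]; simp
    have hq0 : q = 0 := cv_inj (by rw [this, cv_zero])
    have : p - ⌊α⌋ • u - ⌊β⌋ • v = 0 := hq0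
    linear_combination (norm := abel) this
  · exfalso
    rcases le_or_gt (s + t) 1 with hle | hgt
    · have hmem : cv q ∈ convexHull ℝ ({0, cv u, cv v} : Set (Fin 3 → ℝ)) := by
        have := mem_hull3 (x0 := 0) (x1 := cv u) (x2 := cv v) hs0 ht0 hle
        rwa [smul_zero, zero_add, ← hq] at this
      rcases hemp q hmem with h | h | h
      · have : cv q = 0 := by rw [h, cv_zero]
        exact h0 (hind s t (by rw [← hq, this]))
      · have : (s - 1) • cv u + t • cv v = 0 := by
          have hcv : cv q = cv u := by rw [h]
          rw [hq] at hcv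
          linear_combination (norm := module) hcv
        have := (hind _ _ this).1
        linarith
      · have : s • cv u + (t - 1) • cv v = 0 := by
          have hcv : cv q = cv v := by rw [h]
          rw [hq] at hcv
          linear_combination (norm := module) hcv
        have := (hind _ _ this).2
        linarith
    · set q' : Fin 3 → ℤ := u + v - q with hq'def
      have hq' : cv q' = (1 - s) • cv u + (1 - t) • cv v := by
        rw [hq'def, cv_sub, cv_add, hq]; module
      have hmem : cv q' ∈ convexHull ℝ ({0, cv u, cv v} : Set (Fin 3 → ℝ)) := by
        have := mem_hull3 (x0 := 0) (x1 := cv u) (x2 := cv v)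
          (s := 1 - s) (t := 1 - t) (by linarith) (by linarith) (by linarith)
        rwa [smul_zero, zero_add, ← hq'] at this
      rcases hemp q' hmem with h | h | h
      · have : cv q' = 0 := by rw [h, cv_zero]
        rw [hq'] at this
        have := (hind _ _ this).1
        linarith
      · have : (-s) • cv u + (1 - t) • cv v = 0 := by
          have hcv : cv q' = cv u := by rw [h]
          rw [hq'] at hcv
          linear_combination (norm := module) hcv
        have := (hind _ _ this).2
        linarith
      · have : (1 - s) • cv u + (-t) • cv v = 0 := by
          have hcv : cv q' = cv v := by rw [h]
          rw [hq'] at hcv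
          linear_combination (norm := module) hcv
        have := (hind _ _ this).1
        linarith

lemma cramer3 (u v x : Fin 3 → ℝ)
    (hn : ¬(u 1 * v 2 - u 2 * v 1 = 0 ∧ u 2 * v 0 - u 0 * v 2 = 0 ∧ u 0 * v 1 - u 1 * v 0 = 0))
    (hdot : (u 1 * v 2 - u 2 * v 1) * x 0 + (u 2 * v 0 - u 0 * v 2) * x 1
      + (u 0 * v 1 - u 1 * v 0) * x 2 = 0) :
    ∃ α β : ℝ, x = α • u + β • v := by
  have final : ∀ α β : ℝ, x 0 = α * u 0 + β * v 0 → x 1 = α * u 1 + β * v 1 →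
      x 2 = α * u 2 + β * v 2 → x = α • u + β • v := by
    intro α β e0 e1 e2
    funext j
    fin_cases j
    · exact e0
    · exact e1
    · exact e2
  by_cases h2 : u 0 * v 1 - u 1 * v 0 ≠ 0
  · refine ⟨(x 0 * v 1 - x 1 * v 0) / (u 0 * v 1 - u 1 * v 0),
      (u 0 * x 1 - u 1 * x 0) / (u 0 * v 1 - u 1 * v 0), final _ _ ?_ ?_ ?_⟩
    · rw [div_mul_eq_mul_div, div_mul_eq_mul_div, ← add_div, eq_div_iff h2]; ring
    · rw [div_mul_eq_mul_div, div_mul_eq_mul_div, ← add_div, eq_div_iff h2]; ring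
    · rw [div_mul_eq_mul_div, div_mul_eq_mul_div, ← add_div, eq_div_iff h2]; linear_combination hdot
  · by_cases h0 : u 1 * v 2 - u 2 * v 1 ≠ 0
    · refine ⟨(x 1 * v 2 - x 2 * v 1) / (u 1 * v 2 - u 2 * v 1),
        (u 1 * x 2 - u 2 * x 1) / (u 1 * v 2 - u 2 * v 1), final _ _ ?_ ?_ ?_⟩
      · rw [div_mul_eq_mul_div, div_mul_eq_mul_div, ← add_div, eq_div_iff h0]; linear_combination hdot
      · rw [div_mul_eq_mul_div, div_mul_eq_mul_div, ← add_div, eq_div_iff h0]; ring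
      · rw [div_mul_eq_mul_div, div_mul_eq_mul_div, ← add_div, eq_div_iff h0]; ring
    · by_cases h1 : u 2 * v 0 - u 0 * v 2 ≠ 0
      · refine ⟨(x 2 * v 0 - x 0 * v 2) / (u 2 * v 0 - u 0 * v 2),
          (u 2 * x 0 - u 0 * x 2) / (u 2 * v 0 - u 0 * v 2), final _ _ ?_ ?_ ?_⟩
        · rw [div_mul_eq_mul_div, div_mul_eq_mul_div, ← add_div, eq_div_iff h1]; ring
        · rw [div_mul_eq_mul_div, div_mul_eq_mul_div, ← add_div, eq_div_iff h1]; linear_combination hdot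
        · rw [div_mul_eq_mul_div, div_mul_eq_mul_div, ← add_div, eq_div_iff h1]; ring
      · push_neg at h0 h1
        exact absurd ⟨h0, h1, not_not.mp h2⟩ hn

lemma basis_lemma (w1 w2 : Fin 3 → ℤ) (n : Fin 3 → ℤ)
    (hplane : ∀ p : Fin 3 → ℤ, n 0 * p 0 + n 1 * p 1 + n 2 * p 2 = 0 →
      ∃ m k : ℤ, p = m • w1 + k • w2) :
    ∃ M Minv : Matrix (Fin 3) (Fin 3) ℤ,
      M * Minv = 1 ∧ Minv * M = 1 ∧
      M.mulVec w1 = Pi.single 0 1 ∧ M.mulVec w2 = Pi.single 1 1 := by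
  classical
  set A : ℤ := (Int.gcd (n 0) (n 1) : ℤ) with hAdef
  set G : ℤ := (Int.gcd A (n 2) : ℤ) with hGdef
  have hdvd0 : G ∣ n 0 := dvd_trans (Int.gcd_dvd_left _ _) (Int.gcd_dvd_left _ _)
  have hdvd1 : G ∣ n 1 := dvd_trans (Int.gcd_dvd_left _ _) (Int.gcd_dvd_right _ _)
  have hdvd2 : G ∣ n 2 := (Int.gcd_dvd_right _ _)
  have h1 : A = n 0 * Int.gcdA (n 0) (n 1) + n 1 * Int.gcdB (n 0) (n 1) :=
    Int.gcd_eq_gcd_ab _ _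
  have h2 : G = A * Int.gcdA A (n 2) + n 2 * Int.gcdB A (n 2) :=
    Int.gcd_eq_gcd_ab _ _
  set w : Fin 3 → ℤ := ![Int.gcdA (n 0) (n 1) * Int.gcdA A (n 2),
      Int.gcdB (n 0) (n 1) * Int.gcdA A (n 2), Int.gcdB A (n 2)] with hwdef
  have hw : n 0 * w 0 + n 1 * w 1 + n 2 * w 2 = G := by
    simp only [hwdef, Matrix.cons_val_zero, Matrix.cons_val_one, Matrix.head_cons,
      Matrix.cons_val_two, Matrix.tail_cons]
    linear_combination -h2 - Int.gcdA A (n 2) * h1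
  have ht : ∀ i, G * (n i / G) = n i := fun i => by
    fin_cases i
    · exact Int.mul_ediv_cancel' hdvd0
    · exact Int.mul_ediv_cancel' hdvd1
    · exact Int.mul_ediv_cancel' hdvd2
  have hsingle : ∀ i, n 0 * (Pi.single i 1 : Fin 3 → ℤ) 0
      + n 1 * (Pi.single i 1 : Fin 3 → ℤ) 1 + n 2 * (Pi.single i 1 : Fin 3 → ℤ) 2 = n i := by
    intro i; fin_cases i <;> simp
  have hcol : ∀ i, ∃ m k : ℤ,
      (Pi.single i 1 : Fin 3 → ℤ) = m • w1 + k • w2 + (n i / G) • w := by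
    intro i
    have hdot : n 0 * ((Pi.single i 1 : Fin 3 → ℤ) - (n i / G) • w) 0
        + n 1 * ((Pi.single i 1 : Fin 3 → ℤ) - (n i / G) • w) 1
        + n 2 * ((Pi.single i 1 : Fin 3 → ℤ) - (n i / G) • w) 2 = 0 := by
      simp only [Pi.sub_apply, Pi.smul_apply, smul_eq_mul]
      linear_combination hsingle i - (n i / G) * hw - ht i
    obtain ⟨m, k, hmk⟩ := hplane _ hdot
    refine ⟨m, k, ?_⟩
    have : (Pi.single i 1 : Fin 3 → ℤ) - (n i / G) • w = m • w1 + k • w2 := hmk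
    linear_combination (norm := abel) this
  choose m k hmk using hcol
  set B : Matrix (Fin 3) (Fin 3) ℤ := Matrix.of fun r j => ![w1, w2, w] j r with hBdef
  set C : Matrix (Fin 3) (Fin 3) ℤ := Matrix.of fun j i => ![m i, k i, n i / G] j with hCdef
  have hBC : B * C = 1 := by
    ext r i
    rw [Matrix.mul_apply, Fin.sum_univ_three]
    have hthis := congrFun (hmk i) r
    simp only [Pi.add_apply, Pi.smul_apply, smul_eq_mul, Pi.single_apply] at hthis
    simp only [hBdef, hCdef, Matrix.of_apply, Matrix.cons_val_zero, Matrix.cons_val_one,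
      Matrix.head_cons, Matrix.cons_val_two, Matrix.tail_cons]
    rw [Matrix.one_apply]
    split_ifs at hthis ⊢ <;> linarith
  have hCB : C * B = 1 := mul_eq_one_comm.mp hBC
  refine ⟨C, B, hCB, hBC, ?_, ?_⟩
  · have hw1 : w1 = B.mulVec (Pi.single 0 1) := by
      funext r
      rw [Matrix.mulVec_single]
      simp [hBdef]
    rw [hw1, Matrix.mulVec_mulVec, hCB, Matrix.one_mulVec]
  · have hw2 : w2 = B.mulVec (Pi.single 1 1) := by
      funext r
      rw [Matrix.mulVec_single]
      simp [hBdef]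
    rw [hw2, Matrix.mulVec_mulVec, hCB, Matrix.one_mulVec]

lemma hull_plane (n : Fin 3 → ℝ) (r : ℝ) (s : Set (Fin 3 → ℝ))
    (h : ∀ y ∈ s, n 0 * y 0 + n 1 * y 1 + n 2 * y 2 = r) :
    ∀ x ∈ convexHull ℝ s, n 0 * x 0 + n 1 * x 1 + n 2 * x 2 = r := by
  have hlin : IsLinearMap ℝ (fun x : Fin 3 → ℝ => n 0 * x 0 + n 1 * x 1 + n 2 * x 2) := by
    constructor
    · intro x y; simp only [Pi.add_apply]; ring
    · intro c x; simp only [Pi.smul_apply, smul_eq_mul]; ring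
  intro x hx
  exact convexHull_min (fun y hy => h y hy) (convex_hyperplane hlin r) hx

lemma hull_translate (t : Fin 3 → ℝ) (s : Set (Fin 3 → ℝ)) (x : Fin 3 → ℝ)
    (hx : x ∈ convexHull ℝ s) :
    t + x ∈ convexHull ℝ ((t + ·) '' s) := by
  have h := AffineMap.image_convexHull
    ((AffineEquiv.constVAdd ℝ (Fin 3 → ℝ) t).toAffineMap) s
  have hx2 : t + x ∈ ((AffineEquiv.constVAdd ℝ (Fin 3 → ℝ) t).toAffineMap) '' (convexHull ℝ s) :=
    ⟨x, hx, rfl⟩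
  rw [h] at hx2
  exact hx2

/-- the affine map x ↦ A x + t -/
noncomputable def affOf (A : Matrix (Fin 3) (Fin 3) ℝ) (t : Fin 3 → ℝ) :
    (Fin 3 → ℝ) →ᵃ[ℝ] (Fin 3 → ℝ) where
  toFun := fun x => A.mulVec x + t
  linear := A.mulVecLin
  map_vadd' := by
    intro p v
    simp only [vadd_eq_add, Matrix.mulVecLin_apply, Matrix.mulVec_add]
    abel

lemma gcd_one_of (H : ℤ) (hH : 0 ≤ H) (c c' : ℤ) (hc : c ≠ 0) (hdiv : H * c' = c)
    (n : ℤ) (h : c' = n * c) : H = 1 := by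
  have hc' : c' ≠ 0 := by rintro rfl; simp at hdiv; omega
  have h2 : (n * H) * c' = 1 * c' := by linear_combination n * hdiv - h
  have h3 : n * H = 1 := mul_right_cancel₀ hc' h2
  rcases Int.isUnit_iff.mp (IsUnit.of_mul_eq_one (a := H) n (by linarith [mul_comm n H])) with h4 | h4 <;>
    omega

lemma map_mul_int (P Q : Matrix (Fin 3) (Fin 3) ℤ) :
    ((P * Q).map (Int.cast : ℤ → ℝ)) = P.map (Int.cast : ℤ → ℝ) * Q.map (Int.cast : ℤ → ℝ) := by
  ext i j
  simp [Matrix.map_apply, Matrix.mul_apply, Fin.sum_univ_three]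

lemma map_one_int : ((1 : Matrix (Fin 3) (Fin 3) ℤ).map (Int.cast : ℤ → ℝ)) = 1 :=
  Matrix.map_one _ Int.cast_zero Int.cast_one

lemma F_mulVec (σ : ℤ) (x : Fin 3 → ℤ) :
    (!![1,0,0; 0,1,0; 0,0,σ] : Matrix (Fin 3) (Fin 3) ℤ).mulVec x = ![x 0, x 1, σ * x 2] := by
  funext r
  fin_cases r <;> simp [Matrix.mulVec, dotProduct, Fin.sum_univ_three]

lemma Sh_mulVec (k l : ℤ) (x : Fin 3 → ℤ) :
    (!![1,0,k; 0,1,l; 0,0,1] : Matrix (Fin 3) (Fin 3) ℤ).mulVec x =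
      ![x 0 + k * x 2, x 1 + l * x 2, x 2] := by
  funext r
  fin_cases r <;> simp [Matrix.mulVec, dotProduct, Fin.sum_univ_three] <;> ring

lemma single0 : (Pi.single 0 1 : Fin 3 → ℤ) = ![1,0,0] := by
  funext r; fin_cases r <;> simp [Pi.single_apply]

lemma single1 : (Pi.single 1 1 : Fin 3 → ℤ) = ![0,1,0] := by
  funext r; fin_cases r <;> simp [Pi.single_apply]

end WhiteAux

open WhiteAux in
theorem stmt_0 (v : Fin 4 → Fin 3 → ℤ)
    (hai : AffineIndependent ℝ (fun i => fun j => (v i j : ℝ)))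
    (hempty : ∀ x ∈ convexHull ℝ (Set.range (fun i => fun j => ((v i j : ℤ) : ℝ))),
      IsLatticePt x → ∃ i, x = fun j => (v i j : ℝ)) :
    ∃ (a b c : ℤ) (M : Matrix (Fin 3) (Fin 3) ℤ) (u : Fin 3 → ℤ),
      0 ≤ a ∧ a < c ∧ 0 ≤ b ∧ b < c ∧
      Int.gcd a c = 1 ∧ Int.gcd b c = 1 ∧ Int.gcd ((1 - a - b) % c) c = 1 ∧
      (M.det = 1 ∨ M.det = -1) ∧
      (fun x : Fin 3 → ℝ => (M.map (Int.cast : ℤ → ℝ)).mulVec x + fun j => (u j : ℝ)) ''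
          (convexHull ℝ (Set.range (fun i => fun j => ((v i j : ℤ) : ℝ)))) =
        Tet a b c := by
  classical
  set w1 : Fin 3 → ℤ := v 1 - v 0 with hw1def
  set w2 : Fin 3 → ℤ := v 2 - v 0 with hw2def
  set w3 : Fin 3 → ℤ := v 3 - v 0 with hw3def
  -- linear independence of the edge vectors
  have hli : ∀ g0 g1 g2 : ℝ, g0 • cv w1 + g1 • cv w2 + g2 • cv w3 = 0 →
      g0 = 0 ∧ g1 = 0 ∧ g2 = 0 := by
    intro g0 g1 g2 hg
    rw [hw1def, hw2def, hw3def, cv_sub, cv_sub, cv_sub] at hg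
    have h4 := affineIndependent_iff.mp hai Finset.univ ![-(g0+g1+g2), g0, g1, g2]
      (by simp [Fin.sum_univ_four]; ring)
      (by
        rw [Fin.sum_univ_four]
        show (-(g0+g1+g2)) • cv (v 0) + g0 • cv (v 1) + g1 • cv (v 2) + g2 • cv (v 3) = 0
        linear_combination (norm := module) hg)
    refine ⟨?_, ?_, ?_⟩
    · simpa using h4 1 (Finset.mem_univ 1)
    · simpa using h4 2 (Finset.mem_univ 2)
    · simpa using h4 3 (Finset.mem_univ 3)
  -- the cross product of w1, w2
  set n : Fin 3 → ℤ := ![w1 1 * w2 2 - w1 2 * w2 1, w1 2 * w2 0 - w1 0 * w2 2,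
    w1 0 * w2 1 - w1 1 * w2 0] with hndef
  have hcross1 : n 0 * w1 0 + n 1 * w1 1 + n 2 * w1 2 = 0 := by
    simp [hndef]; ring
  have hcross2 : n 0 * w2 0 + n 1 * w2 1 + n 2 * w2 2 = 0 := by
    simp [hndef]; ring
  have hdet : n 0 * w3 0 + n 1 * w3 1 + n 2 * w3 2 ≠ 0 := by
    intro h
    set A : Matrix (Fin 3) (Fin 3) ℝ := Matrix.of fun r j => ![cv w1, cv w2, cv w3] j r with hAdef
    have hA : A.det = ((n 0 * w3 0 + n 1 * w3 1 + n 2 * w3 2 : ℤ) : ℝ) := by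
      rw [Matrix.det_fin_three]
      simp [hAdef, hndef, cv]
      push_cast
      ring
    obtain ⟨g, hg0, hgv⟩ := (Matrix.exists_mulVec_eq_zero_iff).mpr (by rw [hA, h]; simp)
    have hcomb : g 0 • cv w1 + g 1 • cv w2 + g 2 • cv w3 = 0 := by
      funext r
      have := congrFun hgv r
      simp only [Matrix.mulVec, dotProduct, Fin.sum_univ_three, hAdef, Matrix.of_apply,
        Matrix.cons_val_zero, Matrix.cons_val_one, Matrix.head_cons, Matrix.cons_val_two,
        Matrix.tail_cons, Pi.zero_apply] at this
      simp only [Pi.add_apply, Pi.smul_apply, smul_eq_mul, Pi.zero_apply]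
      linarith
    obtain ⟨e0, e1, e2⟩ := hli _ _ _ hcomb
    exact hg0 (funext fun i => by fin_cases i <;> simp [e0, e1, e2])
  have hn : ¬(n 0 = 0 ∧ n 1 = 0 ∧ n 2 = 0) := by
    rintro ⟨h0, h1, h2⟩
    exact hdet (by rw [h0, h1, h2]; ring)
  -- the range as a four-element set
  have hrange : Set.range (fun i => fun j => ((v i j : ℤ) : ℝ)) =
      ({cv (v 0), cv (v 1), cv (v 2), cv (v 3)} : Set (Fin 3 → ℝ)) := by
    ext x
    constructor
    · rintro ⟨i, rfl⟩
      fin_cases i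
      · exact Set.mem_insert _ _
      · exact Set.mem_insert_iff.mpr (Or.inr (Set.mem_insert _ _))
      · exact Set.mem_insert_iff.mpr (Or.inr (Set.mem_insert_iff.mpr (Or.inr (Set.mem_insert _ _))))
      · exact Set.mem_insert_iff.mpr (Or.inr (Set.mem_insert_iff.mpr (Or.inr
          (Set.mem_insert_iff.mpr (Or.inr rfl)))))
    · rintro (rfl | rfl | rfl | rfl)
      · exact ⟨0, rfl⟩
      · exact ⟨1, rfl⟩
      · exact ⟨2, rfl⟩
      · exact ⟨3, rfl⟩
  -- integer form of emptiness
  have hemptyZ : ∀ q : Fin 3 → ℤ,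
      cv q ∈ convexHull ℝ (Set.range (fun i => fun j => ((v i j : ℤ) : ℝ))) →
      q = v 0 ∨ q = v 1 ∨ q = v 2 ∨ q = v 3 := by
    intro q hq
    obtain ⟨i, hi⟩ := hempty (cv q) hq (fun j => ⟨q j, rfl⟩)
    have : q = v i := cv_inj hi
    fin_cases i
    · exact Or.inl this
    · exact Or.inr (Or.inl this)
    · exact Or.inr (Or.inr (Or.inl this))
    · exact Or.inr (Or.inr (Or.inr this))
  -- the face {0, w1, w2} is empty
  have hface : ∀ q : Fin 3 → ℤ,
      cv q ∈ convexHull ℝ ({0, cv w1, cv w2} : Set (Fin 3 → ℝ)) →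
      q = 0 ∨ q = w1 ∨ q = w2 := by
    intro q hq
    have htr := hull_translate (cv (v 0)) _ _ hq
    have himg : ((cv (v 0) + ·) '' {0, cv w1, cv w2} : Set (Fin 3 → ℝ)) =
        {cv (v 0), cv (v 1), cv (v 2)} := by
      rw [Set.image_insert_eq, Set.image_insert_eq, Set.image_singleton]
      have e0 : cv (v 0) + 0 = cv (v 0) := add_zero _
      have a1 : v 0 + w1 = v 1 := by rw [hw1def]; abel
      have a2 : v 0 + w2 = v 2 := by rw [hw2def]; abel
      have e1 : cv (v 0) + cv w1 = cv (v 1) := by rw [← cv_add, a1]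
      have e2 : cv (v 0) + cv w2 = cv (v 2) := by rw [← cv_add, a2]
      rw [e0, e1, e2]
    rw [himg] at htr
    have hsub : ({cv (v 0), cv (v 1), cv (v 2)} : Set (Fin 3 → ℝ)) ⊆
        Set.range (fun i => fun j => ((v i j : ℤ) : ℝ)) := by
      rw [hrange]
      intro x hx
      rcases hx with rfl | rfl | rfl
      · exact Set.mem_insert _ _
      · exact Set.mem_insert_iff.mpr (Or.inr (Set.mem_insert _ _))
      · exact Set.mem_insert_iff.mpr (Or.inr (Set.mem_insert_iff.mpr (Or.inr (Set.mem_insert _ _))))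
    have hmem : cv (v 0 + q) ∈ convexHull ℝ (Set.range (fun i => fun j => ((v i j : ℤ) : ℝ))) := by
      rw [cv_add]
      exact convexHull_mono hsub htr
    rcases hemptyZ _ hmem with h | h | h | h
    · left; linear_combination (norm := abel) h
    · right; left; rw [hw1def]; linear_combination (norm := abel) h
    · right; right; rw [hw2def]; linear_combination (norm := abel) h
    · exfalso
      have hq3 : q = w3 := by rw [hw3def]; linear_combination (norm := abel) h
      rw [hq3] at hq
      have hpl := hull_plane (cv n) 0 {0, cv w1, cv w2} ?_ (cv w3) hq
      · apply hdet
        have : ((n 0 * w3 0 + n 1 * w3 1 + n 2 * w3 2 : ℤ) : ℝ) = 0 := by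
          push_cast
          simpa [cv] using hpl
        exact_mod_cast this
      · intro y hy
        rcases hy with rfl | rfl | rfl
        · simp
        · have : ((n 0 * w1 0 + n 1 * w1 1 + n 2 * w1 2 : ℤ) : ℝ) = 0 := by
            rw [hcross1]; simp
          push_cast at this
          simpa [cv] using this
        · have : ((n 0 * w2 0 + n 1 * w2 1 + n 2 * w2 2 : ℤ) : ℝ) = 0 := by
            rw [hcross2]; simp
          push_cast at this
          simpa [cv] using this
  have hind12 : ∀ s t : ℝ, s • cv w1 + t • cv w2 = 0 → s = 0 ∧ t = 0 := by
    intro s t h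
    have := hli s t 0 (by rw [zero_smul, add_zero]; exact h)
    exact ⟨this.1, this.2.1⟩
  have hplane : ∀ p : Fin 3 → ℤ, n 0 * p 0 + n 1 * p 1 + n 2 * p 2 = 0 →
      ∃ m k : ℤ, p = m • w1 + k • w2 := by
    intro p hp
    have hc0 : (n 0 : ℝ) = cv w1 1 * cv w2 2 - cv w1 2 * cv w2 1 := by
      simp only [hndef, cv, Matrix.cons_val_zero, Matrix.cons_val_one, Matrix.head_cons,
        Matrix.cons_val_two, Matrix.tail_cons]; push_cast; ring
    have hc1 : (n 1 : ℝ) = cv w1 2 * cv w2 0 - cv w1 0 * cv w2 2 := by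
      simp only [hndef, cv, Matrix.cons_val_zero, Matrix.cons_val_one, Matrix.head_cons,
        Matrix.cons_val_two, Matrix.tail_cons]; push_cast; ring
    have hc2 : (n 2 : ℝ) = cv w1 0 * cv w2 1 - cv w1 1 * cv w2 0 := by
      simp only [hndef, cv, Matrix.cons_val_zero, Matrix.cons_val_one, Matrix.head_cons,
        Matrix.cons_val_two, Matrix.tail_cons]; push_cast; ring
    have hnreal : ¬(cv w1 1 * cv w2 2 - cv w1 2 * cv w2 1 = 0 ∧
        cv w1 2 * cv w2 0 - cv w1 0 * cv w2 2 = 0 ∧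
        cv w1 0 * cv w2 1 - cv w1 1 * cv w2 0 = 0) := by
      rintro ⟨a0, a1, a2⟩
      rw [← hc0] at a0; rw [← hc1] at a1; rw [← hc2] at a2
      exact hn ⟨by exact_mod_cast a0, by exact_mod_cast a1, by exact_mod_cast a2⟩
    have hdotreal : (cv w1 1 * cv w2 2 - cv w1 2 * cv w2 1) * cv p 0 +
        (cv w1 2 * cv w2 0 - cv w1 0 * cv w2 2) * cv p 1 +
        (cv w1 0 * cv w2 1 - cv w1 1 * cv w2 0) * cv p 2 = 0 := by
      rw [← hc0, ← hc1, ← hc2]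
      have : ((n 0 * p 0 + n 1 * p 1 + n 2 * p 2 : ℤ) : ℝ) = 0 := by rw [hp]; simp
      push_cast at this
      simpa [cv] using this
    obtain ⟨α, β, hab⟩ := cramer3 (cv w1) (cv w2) (cv p) hnreal hdotreal
    exact key w1 w2 hind12 hface p α β hab
  obtain ⟨C, B, hCB, hBC, hCw1, hCw2⟩ := basis_lemma w1 w2 n hplane
  set y : Fin 3 → ℤ := C.mulVec w3 with hydef
  have hy2 : y 2 ≠ 0 := by
    intro h22
    have hCq : C.mulVec (w3 - y 0 • w1 - y 1 • w2) = 0 := by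
      rw [Matrix.mulVec_sub, Matrix.mulVec_sub, Matrix.mulVec_smul, Matrix.mulVec_smul,
        hCw1, hCw2, ← hydef]
      funext r
      fin_cases r <;>
        simp [Pi.single_apply] <;> omega
    have hzero : w3 - y 0 • w1 - y 1 • w2 = 0 := by
      have h := congrArg (fun z => B.mulVec z) hCq
      simpa [Matrix.mulVec_mulVec, hBC, Matrix.one_mulVec, Matrix.mulVec_zero] using h
    have hr : (y 0 : ℝ) • cv w1 + (y 1 : ℝ) • cv w2 + (-1 : ℝ) • cv w3 = 0 := by
      have h0 : cv (w3 - y 0 • w1 - y 1 • w2) = 0 := by rw [hzero, cv_zero]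
      rw [cv_sub, cv_sub, cv_zsmul, cv_zsmul] at h0
      linear_combination (norm := module) -h0
    have := (hli _ _ _ hr).2.2
    norm_num at this
  set σ : ℤ := if 0 < y 2 then 1 else -1 with hσdef
  have hσσ : σ * σ = 1 := by rw [hσdef]; split_ifs <;> ring
  set c : ℤ := σ * y 2 with hcdef
  have hcpos : 0 < c := by
    rw [hcdef, hσdef]; split_ifs with hy <;> omega
  set kk : ℤ := -(y 0 / c) with hkdef
  set ll : ℤ := -(y 1 / c) with hldef
  set a : ℤ := y 0 % c with hadef
  set b : ℤ := y 1 % c with hbdef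
  set F : Matrix (Fin 3) (Fin 3) ℤ := !![1,0,0; 0,1,0; 0,0,σ] with hFdef
  set Sh : Matrix (Fin 3) (Fin 3) ℤ := !![1,0,kk; 0,1,ll; 0,0,1] with hShdef
  set Shinv : Matrix (Fin 3) (Fin 3) ℤ := !![1,0,-kk; 0,1,-ll; 0,0,1] with hShinvdef
  have hFF : F * F = 1 := by
    rw [hFdef, Matrix.mul_fin_three, Matrix.one_fin_three]
    norm_num [hσσ]
  have hSh1 : Sh * Shinv = 1 := by
    rw [hShdef, hShinvdef, Matrix.mul_fin_three, Matrix.one_fin_three]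
    norm_num
  have hSh2 : Shinv * Sh = 1 := mul_eq_one_comm.mp hSh1
  set M : Matrix (Fin 3) (Fin 3) ℤ := Sh * (F * C) with hMdef
  set Minv : Matrix (Fin 3) (Fin 3) ℤ := B * (F * Shinv) with hMinvdef
  have hMMinv : M * Minv = 1 := by
    rw [hMdef, hMinvdef]
    calc Sh * (F * C) * (B * (F * Shinv)) = Sh * (F * (C * (B * (F * Shinv)))) := by
          simp only [Matrix.mul_assoc]
      _ = 1 := by
          rw [← Matrix.mul_assoc C B, hCB, Matrix.one_mul, ← Matrix.mul_assoc F F, hFF,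
            Matrix.one_mul, hSh1]
  have hMinvM : Minv * M = 1 := mul_eq_one_comm.mp hMMinv
  have hdetM : M.det = 1 ∨ M.det = -1 :=
    Int.isUnit_iff.mp (IsUnit.of_mul_eq_one _
      (by rw [← Matrix.det_mul, hMMinv, Matrix.det_one]))
  have hMw1 : M.mulVec w1 = ![1, 0, 0] := by
    rw [hMdef, ← Matrix.mulVec_mulVec, ← Matrix.mulVec_mulVec, hCw1, single0, hFdef,
      F_mulVec, hShdef, Sh_mulVec]
    funext r
    fin_cases r <;> simp
  have hMw2 : M.mulVec w2 = ![0, 1, 0] := by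
    rw [hMdef, ← Matrix.mulVec_mulVec, ← Matrix.mulVec_mulVec, hCw2, single1, hFdef,
      F_mulVec, hShdef, Sh_mulVec]
    funext r
    fin_cases r <;> simp
  have hMw3 : M.mulVec w3 = ![a, b, c] := by
    rw [hMdef, ← Matrix.mulVec_mulVec, ← Matrix.mulVec_mulVec, ← hydef, hFdef,
      F_mulVec, hShdef, Sh_mulVec]
    funext r
    fin_cases r <;> simp
    · rw [hadef, hkdef, Int.emod_def, hcdef]; ring
    · rw [hbdef, hldef, Int.emod_def, hcdef]; ring
    · rw [hcdef]
  set uu : Fin 3 → ℤ := -(M.mulVec (v 0)) with huudef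
  have hv0 : M.mulVec (v 0) + uu = 0 := by rw [huudef]; abel
  have hv1 : M.mulVec (v 1) + uu = ![1, 0, 0] := by
    rw [huudef, ← sub_eq_add_neg, ← Matrix.mulVec_sub, ← hw1def, hMw1]
  have hv2 : M.mulVec (v 2) + uu = ![0, 1, 0] := by
    rw [huudef, ← sub_eq_add_neg, ← Matrix.mulVec_sub, ← hw2def, hMw2]
  have hv3 : M.mulVec (v 3) + uu = ![a, b, c] := by
    rw [huudef, ← sub_eq_add_neg, ← Matrix.mulVec_sub, ← hw3def, hMw3]
  -- the image equation
  have hcv0 : cv 0 = ![0,0,0] := by funext j; fin_cases j <;> simp [cv]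
  have hzeroR : (0 : Fin 3 → ℝ) = ![0,0,0] := by funext j; fin_cases j <;> simp
  have hcvE1 : cv ![1,0,0] = ![1,0,0] := by funext j; fin_cases j <;> simp [cv]
  have hcvE2 : cv ![0,1,0] = ![0,1,0] := by funext j; fin_cases j <;> simp [cv]
  have hcvW : cv ![a,b,c] = ![(a:ℝ),(b:ℝ),(c:ℝ)] := by funext j; fin_cases j <;> simp [cv]
  have hfimage : (fun x : Fin 3 → ℝ =>
        (M.map (Int.cast : ℤ → ℝ)).mulVec x + fun j => ((uu j : ℤ) : ℝ)) ''
      (convexHull ℝ (Set.range (fun i => fun j => ((v i j : ℤ) : ℝ)))) = Tet a b c := by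
    have hcoe : (fun x : Fin 3 → ℝ =>
        (M.map (Int.cast : ℤ → ℝ)).mulVec x + fun j => ((uu j : ℤ) : ℝ)) =
        ⇑(affOf (M.map (Int.cast : ℤ → ℝ)) (cv uu)) := rfl
    rw [hcoe, AffineMap.image_convexHull, hrange]
    rw [Set.image_insert_eq, Set.image_insert_eq, Set.image_insert_eq, Set.image_singleton]
    have hf : ∀ i : Fin 4, (affOf (M.map (Int.cast : ℤ → ℝ)) (cv uu)) (cv (v i)) =
        cv (M.mulVec (v i) + uu) := by
      intro i
      show (M.map (Int.cast : ℤ → ℝ)).mulVec (cv (v i)) + cv uu = _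
      rw [cv_mulVec, cv_add]
    rw [hf 0, hf 1, hf 2, hf 3, hv0, hv1, hv2, hv3, hcv0, hcvE1, hcvE2, hcvW]
    rfl
  -- emptiness of the image tetrahedron
  have hTetE : ∀ q : Fin 3 → ℤ, cv q ∈ Tet a b c →
      q = 0 ∨ q = ![1,0,0] ∨ q = ![0,1,0] ∨ q = ![a,b,c] := by
    intro q hq
    rw [← hfimage] at hq
    obtain ⟨x, hxS, hfx⟩ := hq
    have hxval : x = cv (Minv.mulVec (q - uu)) := by
      have h1 : (M.map (Int.cast : ℤ → ℝ)).mulVec x = cv (q - uu) := by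
        rw [cv_sub, eq_sub_iff_add_eq]; exact hfx
      have h2 : (Minv.map (Int.cast : ℤ → ℝ)).mulVec
          ((M.map (Int.cast : ℤ → ℝ)).mulVec x) = x := by
        rw [Matrix.mulVec_mulVec, ← map_mul_int, hMinvM, map_one_int, Matrix.one_mulVec]
      rw [← h2, h1, cv_mulVec]
    have hqform : ∀ i : Fin 4, Minv.mulVec (q - uu) = v i → q = M.mulVec (v i) + uu := by
      intro i hi
      have : M.mulVec (Minv.mulVec (q - uu)) = q - uu := by
        rw [Matrix.mulVec_mulVec, hMMinv, Matrix.one_mulVec]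
      rw [hi] at this
      rw [this]; abel
    rcases hemptyZ (Minv.mulVec (q - uu)) (hxval ▸ hxS) with h | h | h | h
    · left; rw [hqform 0 h, hv0]
    · right; left; rw [hqform 1 h, hv1]
    · right; right; left; rw [hqform 2 h, hv2]
    · right; right; right; rw [hqform 3 h, hv3]
  have hcR : (c : ℝ) ≠ 0 := by
    exact_mod_cast ne_of_gt hcpos
  -- subset lemmas into the tetrahedron's vertex set
  have hTetSet : Tet a b c = convexHull ℝ
      ({![0,0,0], ![1,0,0], ![0,1,0], ![(a:ℝ),(b:ℝ),(c:ℝ)]} : Set (Fin 3 → ℝ)) := rfl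
  -- gcd (b, c) = 1 via the face {0, e1, w}
  have hgb : Int.gcd b c = 1 := by
    set G : ℤ := (Int.gcd b c : ℤ) with hGdef
    have hGc : G ∣ c := (Int.gcd_dvd_right _ _)
    have hGb : G ∣ b := (Int.gcd_dvd_left _ _)
    have hGc' : G * (c / G) = c := Int.mul_ediv_cancel' hGc
    have hGb' : G * (b / G) = b := Int.mul_ediv_cancel' hGb
    have hGne : G ≠ 0 := by intro h; rw [h] at hGc'; simp at hGc'; omega
    have hGR : (G : ℝ) ≠ 0 := by exact_mod_cast hGne
    have hindE : ∀ s t : ℝ, s • cv ![1,0,0] + t • cv ![a,b,c] = 0 → s = 0 ∧ t = 0 := by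
      intro s t h
      have h2 := congrFun h 2
      have h0 := congrFun h 0
      simp [cv] at h2 h0
      have ht : t = 0 := by
        rcases h2 with h' | h'
        · exact h'
        · exact absurd h' (ne_of_gt hcpos)
      exact ⟨by rw [ht] at h0; simpa using h0, ht⟩
    have hempE : ∀ q : Fin 3 → ℤ,
        cv q ∈ convexHull ℝ ({0, cv ![1,0,0], cv ![a,b,c]} : Set (Fin 3 → ℝ)) →
        q = 0 ∨ q = ![1,0,0] ∨ q = ![a,b,c] := by
      intro q hq
      have hqT : cv q ∈ Tet a b c := by
        rw [hTetSet]
        refine convexHull_mono ?_ hq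
        intro x hx
        rcases hx with rfl | rfl | rfl
        · rw [hzeroR]; exact Set.mem_insert _ _
        · rw [hcvE1]; exact Set.mem_insert_iff.mpr (Or.inr (Set.mem_insert _ _))
        · rw [hcvW]
          exact Set.mem_insert_iff.mpr (Or.inr (Set.mem_insert_iff.mpr (Or.inr
            (Set.mem_insert_iff.mpr (Or.inr rfl)))))
      rcases hTetE q hqT with h | h | h | h
      · exact Or.inl h
      · exact Or.inr (Or.inl h)
      · exfalso
        have hpl := hull_plane ![0,(c:ℝ),-(b:ℝ)] 0 _ ?_ (cv q) hq
        · rw [h] at hpl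
          simp [cv] at hpl
          exact absurd hpl (ne_of_gt hcpos)
        · intro z hz
          rcases hz with rfl | rfl | rfl <;> simp [cv] <;> ring
      · exact Or.inr (Or.inr h)
    have hbGR : ((b / G : ℤ) : ℝ) * (G : ℝ) = (b : ℝ) := by
      exact_mod_cast (by linarith [hGb'] : (b / G) * G = b)
    have hcGR : ((c / G : ℤ) : ℝ) * (G : ℝ) = (c : ℝ) := by
      exact_mod_cast (by linarith [hGc'] : (c / G) * G = c)
    have hdivB : ((b / G : ℤ) : ℝ) = (b:ℝ) / G := by rw [eq_div_iff hGR]; exact hbGR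
    have hdivC : ((c / G : ℤ) : ℝ) = (c:ℝ) / G := by rw [eq_div_iff hGR]; exact hcGR
    obtain ⟨mm, nn, hmn⟩ := key ![1,0,0] ![a,b,c] hindE hempE ![0, b / G, c / G]
      (-(a:ℝ)/(G:ℝ)) (1/(G:ℝ)) (by
        funext j
        fin_cases j <;> simp [cv, hdivB, hdivC] <;> ring)
    have h22 := congrFun hmn 2
    simp [Pi.add_apply, Pi.smul_apply, smul_eq_mul] at h22
    have hG1 : G = 1 := gcd_one_of G (by rw [hGdef]; exact_mod_cast Int.natCast_nonneg _)
      c (c / G) (ne_of_gt hcpos) hGc' nn h22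
    rw [hGdef] at hG1
    exact_mod_cast hG1
  -- gcd (a, c) = 1 via the face {0, e2, w}
  have hga : Int.gcd a c = 1 := by
    set G : ℤ := (Int.gcd a c : ℤ) with hGdef
    have hGc : G ∣ c := (Int.gcd_dvd_right _ _)
    have hGa : G ∣ a := (Int.gcd_dvd_left _ _)
    have hGc' : G * (c / G) = c := Int.mul_ediv_cancel' hGc
    have hGa' : G * (a / G) = a := Int.mul_ediv_cancel' hGa
    have hGne : G ≠ 0 := by intro h; rw [h] at hGc'; simp at hGc'; omega
    have hGR : (G : ℝ) ≠ 0 := by exact_mod_cast hGne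
    have hindE : ∀ s t : ℝ, s • cv ![0,1,0] + t • cv ![a,b,c] = 0 → s = 0 ∧ t = 0 := by
      intro s t h
      have h2 := congrFun h 2
      have h1 := congrFun h 1
      simp [cv] at h2 h1
      have ht : t = 0 := by
        rcases h2 with h' | h'
        · exact h'
        · exact absurd h' (ne_of_gt hcpos)
      exact ⟨by rw [ht] at h1; simpa using h1, ht⟩
    have hempE : ∀ q : Fin 3 → ℤ,
        cv q ∈ convexHull ℝ ({0, cv ![0,1,0], cv ![a,b,c]} : Set (Fin 3 → ℝ)) →
        q = 0 ∨ q = ![0,1,0] ∨ q = ![a,b,c] := by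
      intro q hq
      have hqT : cv q ∈ Tet a b c := by
        rw [hTetSet]
        refine convexHull_mono ?_ hq
        intro x hx
        rcases hx with rfl | rfl | rfl
        · rw [hzeroR]; exact Set.mem_insert _ _
        · rw [hcvE2]
          exact Set.mem_insert_iff.mpr (Or.inr (Set.mem_insert_iff.mpr (Or.inr
            (Set.mem_insert _ _))))
        · rw [hcvW]
          exact Set.mem_insert_iff.mpr (Or.inr (Set.mem_insert_iff.mpr (Or.inr
            (Set.mem_insert_iff.mpr (Or.inr rfl)))))
      rcases hTetE q hqT with h | h | h | h
      · exact Or.inl h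
      · exfalso
        have hpl := hull_plane ![(c:ℝ),0,-(a:ℝ)] 0 _ ?_ (cv q) hq
        · rw [h] at hpl
          simp [cv] at hpl
          exact absurd hpl (ne_of_gt hcpos)
        · intro z hz
          rcases hz with rfl | rfl | rfl <;> simp [cv] <;> ring
      · exact Or.inr (Or.inl h)
      · exact Or.inr (Or.inr h)
    have haGR : ((a / G : ℤ) : ℝ) * (G : ℝ) = (a : ℝ) := by
      exact_mod_cast (by linarith [hGa'] : (a / G) * G = a)
    have hcGR : ((c / G : ℤ) : ℝ) * (G : ℝ) = (c : ℝ) := by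
      exact_mod_cast (by linarith [hGc'] : (c / G) * G = c)
    have hdivA : ((a / G : ℤ) : ℝ) = (a:ℝ) / G := by rw [eq_div_iff hGR]; exact haGR
    have hdivC : ((c / G : ℤ) : ℝ) = (c:ℝ) / G := by rw [eq_div_iff hGR]; exact hcGR
    obtain ⟨mm, nn, hmn⟩ := key ![0,1,0] ![a,b,c] hindE hempE ![a / G, 0, c / G]
      (-(b:ℝ)/(G:ℝ)) (1/(G:ℝ)) (by
        funext j
        fin_cases j <;> simp [cv, hdivA, hdivC] <;> ring)
    have h22 := congrFun hmn 2
    simp [Pi.add_apply, Pi.smul_apply, smul_eq_mul] at h22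
    have hG1 : G = 1 := gcd_one_of G (by rw [hGdef]; exact_mod_cast Int.natCast_nonneg _)
      c (c / G) (ne_of_gt hcpos) hGc' nn h22
    rw [hGdef] at hG1
    exact_mod_cast hG1
  -- gcd (1 - a - b, c) = 1 via the face {e1, e2, w}
  have hgd : Int.gcd (1 - a - b) c = 1 := by
    set e : ℤ := 1 - a - b with hedef
    set G : ℤ := (Int.gcd e c : ℤ) with hGdef
    have hGc : G ∣ c := (Int.gcd_dvd_right _ _)
    have hGe : G ∣ e := (Int.gcd_dvd_left _ _)
    have hGc' : G * (c / G) = c := Int.mul_ediv_cancel' hGc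
    have hGe' : G * (e / G) = e := Int.mul_ediv_cancel' hGe
    have hGne : G ≠ 0 := by intro h; rw [h] at hGc'; simp at hGc'; omega
    have hGR : (G : ℝ) ≠ 0 := by exact_mod_cast hGne
    have hindE : ∀ s t : ℝ, s • cv ![-1,1,0] + t • cv ![a-1,b,c] = 0 → s = 0 ∧ t = 0 := by
      intro s t h
      have h2 := congrFun h 2
      have h1 := congrFun h 1
      simp [cv] at h2 h1
      have ht : t = 0 := by
        rcases h2 with h' | h'
        · exact h'
        · exact absurd h' (ne_of_gt hcpos)
      exact ⟨by rw [ht] at h1; simpa using h1, ht⟩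
    have hempE : ∀ q : Fin 3 → ℤ,
        cv q ∈ convexHull ℝ ({0, cv ![-1,1,0], cv ![a-1,b,c]} : Set (Fin 3 → ℝ)) →
        q = 0 ∨ q = ![-1,1,0] ∨ q = ![a-1,b,c] := by
      intro q hq
      have htr := hull_translate (cv ![1,0,0]) _ _ hq
      have himg2 : ((cv ![1,0,0] + ·) '' {0, cv ![-1,1,0], cv ![a-1,b,c]} : Set (Fin 3 → ℝ)) =
          {cv ![1,0,0], cv ![0,1,0], cv ![a,b,c]} := by
        rw [Set.image_insert_eq, Set.image_insert_eq, Set.image_singleton]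
        have e0 : cv ![1,0,0] + 0 = cv ![1,0,0] := add_zero _
        have e1 : cv ![1,0,0] + cv ![-1,1,0] = cv ![0,1,0] := by
          rw [← cv_add]
          have : (![1,0,0] : Fin 3 → ℤ) + ![-1,1,0] = ![0,1,0] := by
            funext j; fin_cases j <;> simp
          rw [this]
        have e2 : cv ![1,0,0] + cv ![a-1,b,c] = cv ![a,b,c] := by
          rw [← cv_add]
          have : (![1,0,0] : Fin 3 → ℤ) + ![a-1,b,c] = ![a,b,c] := by
            funext j; fin_cases j <;> simp
          rw [this]
        rw [e0, e1, e2]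
      rw [himg2] at htr
      have hqT : cv (![1,0,0] + q) ∈ Tet a b c := by
        rw [cv_add, hTetSet]
        refine convexHull_mono ?_ htr
        intro x hx
        rcases hx with rfl | rfl | rfl
        · rw [hcvE1]; exact Set.mem_insert_iff.mpr (Or.inr (Set.mem_insert _ _))
        · rw [hcvE2]
          exact Set.mem_insert_iff.mpr (Or.inr (Set.mem_insert_iff.mpr (Or.inr
            (Set.mem_insert _ _))))
        · rw [hcvW]
          exact Set.mem_insert_iff.mpr (Or.inr (Set.mem_insert_iff.mpr (Or.inr
            (Set.mem_insert_iff.mpr (Or.inr rfl)))))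
      rcases hTetE _ hqT with h | h | h | h
      · exfalso
        have hqval : q = ![-1,0,0] := by
          funext j
          have := congrFun h j
          fin_cases j <;> simp at this ⊢ <;> omega
        have hpl := hull_plane ![(c:ℝ),(c:ℝ),(1:ℝ)-(a:ℝ)-(b:ℝ)] 0 _ ?_ (cv q) hq
        · rw [hqval] at hpl
          simp [cv] at hpl
          exact absurd hpl (ne_of_gt hcpos)
        · intro z hz
          rcases hz with rfl | rfl | rfl <;> simp [cv] <;> push_cast <;> ring
      · left
        funext j
        have := congrFun h j
        fin_cases j <;> simp at this ⊢ <;> omega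
      · right; left
        funext j
        have := congrFun h j
        fin_cases j <;> simp at this ⊢ <;> omega
      · right; right
        funext j
        have := congrFun h j
        fin_cases j <;> simp at this ⊢ <;> omega
    have heGR : ((e / G : ℤ) : ℝ) * (G : ℝ) = (e : ℝ) := by
      exact_mod_cast (by linarith [hGe'] : (e / G) * G = e)
    have hcGR : ((c / G : ℤ) : ℝ) * (G : ℝ) = (c : ℝ) := by
      exact_mod_cast (by linarith [hGc'] : (c / G) * G = c)
    have heR : (e : ℝ) = 1 - (a:ℝ) - (b:ℝ) := by rw [hedef]; push_cast; ring
    have hdivE : ((e / G : ℤ) : ℝ) = (e:ℝ) / G := by rw [eq_div_iff hGR]; exact heGR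
    have hdivC : ((c / G : ℤ) : ℝ) = (c:ℝ) / G := by rw [eq_div_iff hGR]; exact hcGR
    obtain ⟨mm, nn, hmn⟩ := key ![-1,1,0] ![a-1,b,c] hindE hempE ![-(e / G), 0, c / G]
      (-(b:ℝ)/(G:ℝ)) (1/(G:ℝ)) (by
        funext j
        fin_cases j <;> simp [cv, hdivE, hdivC, heR] <;> field_simp <;> ring)
    have h22 := congrFun hmn 2
    simp [Pi.add_apply, Pi.smul_apply, smul_eq_mul] at h22
    have hG1 : G = 1 := gcd_one_of G (by rw [hGdef]; exact_mod_cast Int.natCast_nonneg _)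
      c (c / G) (ne_of_gt hcpos) hGc' nn h22
    rw [hGdef] at hG1
    rw [hedef] at hG1
    exact_mod_cast hG1
  have hgd' : Int.gcd ((1 - a - b) % c) c = 1 := by
    have hcop : IsCoprime (1 - a - b) c := Int.isCoprime_iff_gcd_eq_one.mpr hgd
    have hmod : (1 - a - b) % c = (1 - a - b) + c * (-((1 - a - b) / c)) := by
      rw [Int.emod_def]; ring
    rw [hmod]
    exact Int.isCoprime_iff_gcd_eq_one.mp (hcop.add_mul_left_left _)
  exact ⟨a, b, c, M, uu, Int.emod_nonneg _ (ne_of_gt hcpos), Int.emod_lt_of_pos _ hcpos,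
    Int.emod_nonneg _ (ne_of_gt hcpos), Int.emod_lt_of_pos _ hcpos, hga, hgb, hgd', hdetM, hfimage⟩
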